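/- Let H be a real Hilbert space, Ω ⊆ H open, F : Ω → H continuously Fréchet differentiable, x* ∈ Ω, R > 0, and κ := sup{t ∈ [0, R) : B(x*, t) ⊂ Ω}. Suppose the symmetrization F̂'(x*) := (F'(x*) + F'(x*)*)/2 has a bounded linear inverse, and suppose f : [0, R) → ℝ is twice continuously differentiable with f(0) = 0, f'(0) = −1, f' convex and strictly increasing, satisfying the majorant condition ‖F̂'(x*)⁻¹‖ · ‖F'(x) − F'(x* + τ(x − x*))‖ ≤ f'(‖x − x*‖) − f'(τ‖x − x*‖) for all τ ∈ [0, 1] and all x ∈ B(x*, κ). Then for all x ∈ B(x*, κ), the linearization error E_F(x, x*) := F(x*) − [F(x) + F'(x)(x* − x)] satisfies ‖F̂'(x*)⁻¹‖ · ‖E_F(x, x*)‖ ≤ e_f(‖x − x*‖, 0), where e_f(t, u) := f(u) − [f(t) + f'(t)(u − t)]. -/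

import Mathlib

set_option maxHeartbeats 1000000
open RealInnerProductSpace Filter Metric Set

theorem linearization_error_bound {H : Type*} [NormedAddCommGroup H] [InnerProductSpace ℝ H] [CompleteSpace H]
    (Ω : Set H) (hΩ : IsOpen Ω) (F : H → H) (F' : H → H →L[ℝ] H)
    (hFd : ∀ x ∈ Ω, HasFDerivAt F (F' x) x) (hF'c : ContinuousOn F' Ω)
    (xs : H) (hxs : xs ∈ Ω)
    (R : ℝ) (hR : 0 < R) (κ : ℝ)
    (hκ : κ = sSup {u : ℝ | u ∈ Set.Ico (0 : ℝ) R ∧ Metric.ball xs u ⊆ Ω})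
    (Ahat : H →L[ℝ] H)
    (hAhat : Ahat = (1 / 2 : ℝ) • (F' xs + ContinuousLinearMap.adjoint (F' xs)))
    (Ginv : H →L[ℝ] H)
    (hGinv1 : Ginv.comp Ahat = ContinuousLinearMap.id ℝ H)
    (hGinv2 : Ahat.comp Ginv = ContinuousLinearMap.id ℝ H)
    (f f' f'' : ℝ → ℝ)
    (hfd1 : ∀ t ∈ Set.Ico (0 : ℝ) R, HasDerivWithinAt f (f' t) (Set.Ico (0 : ℝ) R) t)
    (hfd2 : ∀ t ∈ Set.Ico (0 : ℝ) R, HasDerivWithinAt f' (f'' t) (Set.Ico (0 : ℝ) R) t)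
    (hfc : ContinuousOn f'' (Set.Ico (0 : ℝ) R))
    (hf0 : f 0 = 0) (hf'0 : f' 0 = -1)
    (hfconv : ConvexOn ℝ (Set.Ico (0 : ℝ) R) f')
    (hfmono : StrictMonoOn f' (Set.Ico (0 : ℝ) R))
    (hmaj : ∀ τ ∈ Set.Icc (0 : ℝ) 1, ∀ x ∈ Metric.ball xs κ,
      ‖Ginv‖ * ‖F' x - F' (xs + τ • (x - xs))‖ ≤ f' ‖x - xs‖ - f' (τ * ‖x - xs‖))
    :
    ∀ x ∈ Metric.ball xs κ,
      ‖Ginv‖ * ‖F xs - (F x + (F' x) (xs - x))‖ ≤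
        f 0 - (f ‖x - xs‖ + f' ‖x - xs‖ * (0 - ‖x - xs‖)) := by
  intro x hx
  set r : ℝ := ‖x - xs‖ with hrdef
  have hrκ : r < κ := by rw [hrdef, ← dist_eq_norm]; exact mem_ball.mp hx
  have hr0 : 0 ≤ r := norm_nonneg _
  have hκR : κ ≤ R := by
    rw [hκ]
    exact Real.sSup_le (fun u hu => le_of_lt hu.1.2) hR.le
  have hrR : r < R := lt_of_lt_of_le hrκ hκR
  have hball : Metric.ball xs κ ⊆ Ω := by
    intro y hy
    have hy' : dist y xs < κ := mem_ball.mp hy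
    have hne : {u : ℝ | u ∈ Set.Ico (0 : ℝ) R ∧ Metric.ball xs u ⊆ Ω}.Nonempty := by
      by_contra h
      rw [Set.not_nonempty_iff_eq_empty] at h
      rw [hκ, h, Real.sSup_empty] at hy'
      exact absurd hy' (not_lt.mpr dist_nonneg)
    rw [hκ] at hy'
    obtain ⟨u, hu, hyu⟩ := exists_lt_of_lt_csSup hne hy'
    exact hu.2 (mem_ball.mpr (by linarith))
  -- continuity of f and f' on Ico 0 R
  have hfcont : ContinuousOn f (Set.Ico (0:ℝ) R) := fun t ht => (hfd1 t ht).continuousWithinAt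
  have hf'cont : ContinuousOn f' (Set.Ico (0:ℝ) R) := fun t ht => (hfd2 t ht).continuousWithinAt
  rcases eq_or_lt_of_le hr0 with hr | hr
  · -- r = 0, so x = xs
    have hxxs : x = xs := by
      have h0 : ‖x - xs‖ = 0 := by rw [← hrdef, ← hr]
      exact sub_eq_zero.mp (norm_eq_zero.mp h0)
    subst hxxs
    simp [← hrdef, ← hr, hf0]
  -- main case: 0 < r
  have hκpos : 0 < κ := lt_of_le_of_lt hr0 hrκ
  have hxsball : xs ∈ Metric.ball xs κ := mem_ball_self hκpos
  set γ : ℝ → H := fun τ => x + τ • (xs - x) with hγdef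
  have hγball : ∀ τ ∈ Set.Icc (0:ℝ) 1, γ τ ∈ Metric.ball xs κ := by
    intro τ hτ
    exact (convex_ball xs κ).add_smul_sub_mem hx hxsball hτ
  have hγΩ : ∀ τ ∈ Set.Icc (0:ℝ) 1, γ τ ∈ Ω := fun τ hτ => hball (hγball τ hτ)
  have hγcont : Continuous γ := by continuity
  have hγeq : ∀ τ : ℝ, γ τ = xs + (1 - τ) • (x - xs) := by
    intro τ; simp only [hγdef]; module
  -- continuity of the integrand
  have hcontF' : ContinuousOn (fun τ => F' (γ τ)) (Set.Icc (0:ℝ) 1) :=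
    hF'c.comp hγcont.continuousOn hγΩ
  -- FTC for F along γ
  have keyF : ∫ τ in (0:ℝ)..1, (F' (γ τ)) (xs - x) = F xs - F x := by
    have := intervalIntegral.integral_eq_sub_of_hasDerivAt
      (f := fun τ => F (γ τ)) (f' := fun τ => (F' (γ τ)) (xs - x)) (a := (0:ℝ)) (b := 1)
      (fun τ hτ => by
        rw [Set.uIcc_of_le zero_le_one] at hτ
        have hγ' : HasDerivAt γ (xs - x) τ := by
          convert ((hasDerivAt_id τ).smul_const (xs - x)).const_add x using 1 <;> simp [hγdef]
        exact (hFd (γ τ) (hγΩ τ hτ)).comp_hasDerivAt τ hγ')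
      (((hcontF'.clm_apply continuousOn_const).mono (by
          rw [Set.uIcc_of_le zero_le_one])).intervalIntegrable)
    simpa [hγdef] using this
  -- rewrite the error as an integral
  have keyE : F xs - (F x + (F' x) (xs - x)) =
      ∫ τ in (0:ℝ)..1, ((F' (γ τ)) (xs - x) - (F' x) (xs - x)) := by
    rw [intervalIntegral.integral_sub
      (((hcontF'.clm_apply continuousOn_const).mono (by
          rw [Set.uIcc_of_le zero_le_one])).intervalIntegrable)
      (intervalIntegrable_const), keyF]
    simp
    abel
  -- FTC for f
  have mapsto : ∀ τ ∈ Set.Icc (0:ℝ) 1, (1 - τ) * r ∈ Set.Ico (0:ℝ) R := by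
    intro τ hτ
    constructor
    · exact mul_nonneg (by linarith [hτ.2]) hr0
    · calc (1 - τ) * r ≤ 1 * r := by nlinarith [hτ.1, hτ.2]
        _ < R := by linarith
  have hcontf' : ContinuousOn (fun τ => f' ((1 - τ) * r) * r) (Set.Icc (0:ℝ) 1) := by
    apply ContinuousOn.mul _ continuousOn_const
    exact hf'cont.comp (by fun_prop) mapsto
  have hintf' : IntervalIntegrable (fun τ => f' ((1 - τ) * r) * r) MeasureTheory.volume 0 1 := by
    apply ContinuousOn.intervalIntegrable
    rw [Set.uIcc_of_le zero_le_one]; exact hcontf'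
  have keyf : ∫ τ in (0:ℝ)..1, f' ((1 - τ) * r) * r = f r - f 0 := by
    have := intervalIntegral.integral_eq_sub_of_hasDeriv_right_of_le
      (f := fun τ => - f ((1 - τ) * r)) (f' := fun τ => f' ((1 - τ) * r) * r)
      (a := (0:ℝ)) (b := 1) zero_le_one
      (ContinuousOn.neg (hfcont.comp (by fun_prop) mapsto))
      (fun t ht => by
        have hs : (1 - t) * r ∈ Set.Ioo (0:ℝ) R := by
          constructor
          · exact mul_pos (by linarith [ht.2]) hr
          · calc (1 - t) * r ≤ 1 * r := by nlinarith [ht.1, ht.2]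
              _ < R := by linarith
        have hnhds : Set.Ico (0:ℝ) R ∈ nhds ((1 - t) * r) :=
          Filter.mem_of_superset (Ioo_mem_nhds hs.1 hs.2) Set.Ioo_subset_Ico_self
        have hfAt : HasDerivAt f (f' ((1 - t) * r)) ((1 - t) * r) :=
          (hfd1 _ (Set.Ioo_subset_Ico_self hs)).hasDerivAt hnhds
        have hg : HasDerivAt (fun τ : ℝ => (1 - τ) * r) (-r) t := by
          simpa using (((hasDerivAt_const t (1:ℝ)).sub (hasDerivAt_id t)).mul_const r)
        have := (hfAt.comp t hg).neg
        have h2 : HasDerivAt (fun τ : ℝ => - f ((1 - τ) * r)) (f' ((1 - t) * r) * r) t := by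
          exact this.congr_deriv (by ring)
        exact h2.hasDerivWithinAt)
      hintf'
    rw [this]; norm_num; ring
  -- pointwise bound
  have hbound : ∀ τ ∈ Set.Icc (0:ℝ) 1,
      ‖Ginv‖ * ‖(F' (γ τ)) (xs - x) - (F' x) (xs - x)‖ ≤ (f' r - f' ((1 - τ) * r)) * r := by
    intro τ hτ
    have hτ' : (1 - τ) ∈ Set.Icc (0:ℝ) 1 := ⟨by linarith [hτ.2], by linarith [hτ.1]⟩
    have hm := hmaj (1 - τ) hτ' x hx
    rw [← hγeq τ] at hm
    have h1 : ‖(F' (γ τ)) (xs - x) - (F' x) (xs - x)‖ ≤ ‖F' x - F' (γ τ)‖ * r := by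
      have : (F' (γ τ)) (xs - x) - (F' x) (xs - x) = (F' (γ τ) - F' x) (xs - x) := by
        simp
      rw [this]
      calc ‖(F' (γ τ) - F' x) (xs - x)‖ ≤ ‖F' (γ τ) - F' x‖ * ‖xs - x‖ :=
            (F' (γ τ) - F' x).le_opNorm _
        _ = ‖F' x - F' (γ τ)‖ * r := by rw [norm_sub_rev, norm_sub_rev xs x]
    calc ‖Ginv‖ * ‖(F' (γ τ)) (xs - x) - (F' x) (xs - x)‖
        ≤ ‖Ginv‖ * (‖F' x - F' (γ τ)‖ * r) :=
          mul_le_mul_of_nonneg_left h1 (norm_nonneg _)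
      _ = (‖Ginv‖ * ‖F' x - F' (γ τ)‖) * r := by ring
      _ ≤ (f' r - f' ((1 - τ) * r)) * r := mul_le_mul_of_nonneg_right hm hr0
  -- put it together
  have hIntLHS : IntervalIntegrable
      (fun τ => ‖Ginv‖ * ‖(F' (γ τ)) (xs - x) - (F' x) (xs - x)‖) MeasureTheory.volume 0 1 := by
    apply ContinuousOn.intervalIntegrable
    rw [Set.uIcc_of_le zero_le_one]
    exact (continuousOn_const.mul
      (((hcontF'.clm_apply continuousOn_const).sub continuousOn_const).norm))
  have hIntRHS : IntervalIntegrable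
      (fun τ => (f' r - f' ((1 - τ) * r)) * r) MeasureTheory.volume 0 1 := by
    apply ContinuousOn.intervalIntegrable
    rw [Set.uIcc_of_le zero_le_one]
    exact (continuousOn_const.sub (hf'cont.comp (by fun_prop) mapsto)).mul continuousOn_const
  calc ‖Ginv‖ * ‖F xs - (F x + (F' x) (xs - x))‖
      = ‖Ginv‖ * ‖∫ τ in (0:ℝ)..1, ((F' (γ τ)) (xs - x) - (F' x) (xs - x))‖ := by rw [keyE]
    _ ≤ ‖Ginv‖ * ∫ τ in (0:ℝ)..1, ‖(F' (γ τ)) (xs - x) - (F' x) (xs - x)‖ :=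
        mul_le_mul_of_nonneg_left
          (intervalIntegral.norm_integral_le_integral_norm zero_le_one) (norm_nonneg _)
    _ = ∫ τ in (0:ℝ)..1, ‖Ginv‖ * ‖(F' (γ τ)) (xs - x) - (F' x) (xs - x)‖ := by
        rw [← intervalIntegral.integral_const_mul]
    _ ≤ ∫ τ in (0:ℝ)..1, (f' r - f' ((1 - τ) * r)) * r :=
        intervalIntegral.integral_mono_on zero_le_one hIntLHS hIntRHS hbound
    _ = (∫ τ in (0:ℝ)..1, f' r * r) - ∫ τ in (0:ℝ)..1, f' ((1 - τ) * r) * r := by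
        rw [← intervalIntegral.integral_sub intervalIntegrable_const hintf']
        congr 1; ext τ; ring
    _ = f' r * r - (f r - f 0) := by rw [keyf]; simp
    _ = f 0 - (f r + f' r * (0 - r)) := by ring
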